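/- Let n ≥ 1, δ ∈ (0, 1), V > 0. Let Σ be an n×n real positive definite matrix and, for each t ∈ {1, …, n}, let Σ'_t be an n×n real positive definite matrix. Let C₀ be a real number with C₀ ≥ 1/λ_min(Σ) + 1/λ_min(Σ'_t) for all t. Let t₀ ∈ {1, …, n} and let X be a random vector in ℝⁿ with E[X] = 0, covariance matrix Σ'_{t₀}, and almost surely X_i ∈ [−V, V] for all i. For each t let Z_t = XᵀΣ^{-1}X − Xᵀ(Σ'_t)^{-1}X + ln(det Σ / det Σ'_t), and let 2𝔏 = max_{t ∈ {1,…,n}} Z_t. Then P( 2𝔏 ≤ min_t ( Tr(Σ'_t Σ^{-1}) − n + ln(det Σ / det Σ'_t) ) − C₀ V² n √(0.5 · ln(2/δ)) ) ≤ δ/2. -/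

import Mathlib

open Matrix MeasureTheory

/-- The smallest eigenvalue of a real symmetric matrix, as the infimum of its spectrum. -/
noncomputable def lamMin {n : ℕ} (M : Matrix (Fin n) (Fin n) ℝ) : ℝ := sInf (spectrum ℝ M)

section Hoeffding

open Real ProbabilityTheory

lemma hoeff_g_pos (p : ℝ) (hp0 : 0 ≤ p) (hp1 : p ≤ 1) (h : ℝ) :
    0 < 1 - p + p * Real.exp h := by
  rcases eq_or_lt_of_le hp0 with rfl | hp
  · norm_num
  · have := exp_pos h
    nlinarith

lemma hoeff_log_bound (p : ℝ) (hp0 : 0 ≤ p) (hp1 : p ≤ 1) (h : ℝ) :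
    Real.log (1 - p + p * Real.exp h) ≤ p * h + h ^ 2 / 8 := by
  set g : ℝ → ℝ := fun x => 1 - p + p * Real.exp x with hg_def
  have hg : ∀ x, 0 < g x := fun x => hoeff_g_pos p hp0 hp1 x
  set F : ℝ → ℝ := fun x => p * x + x ^ 2 / 8 - Real.log (g x) with hF_def
  set F1 : ℝ → ℝ := fun x => p + x / 4 - p * Real.exp x / g x with hF1_def
  have hgd : ∀ x, HasDerivAt g (p * Real.exp x) x := by
    intro x
    exact ((Real.hasDerivAt_exp x).const_mul p).const_add (1 - p)
  have hFd : ∀ x, HasDerivAt F (F1 x) x := by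
    intro x
    have h1 : HasDerivAt (fun x : ℝ => p * x + x ^ 2 / 8) (p + 2 * x / 8) x := by
      exact (((hasDerivAt_id x).const_mul p).add ((hasDerivAt_pow 2 x).div_const 8)).congr_deriv (by norm_num)
    have h2 : HasDerivAt (fun x => Real.log (g x)) (p * Real.exp x / g x) x :=
      (hgd x).log (hg x).ne'
    have := h1.sub h2
    exact this.congr_deriv (by simp only [hF1_def]; ring)
  have hF1d : ∀ x, HasDerivAt F1
      (1 / 4 - (p * Real.exp x * g x - p * Real.exp x * (p * Real.exp x)) / (g x) ^ 2) x := by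
    intro x
    have h1 : HasDerivAt (fun x : ℝ => p + x / 4) (1 / 4) x := by
      simpa using ((hasDerivAt_id x).div_const 4).const_add p
    have h2 : HasDerivAt (fun x => p * Real.exp x / g x)
        ((p * Real.exp x * g x - p * Real.exp x * (p * Real.exp x)) / (g x) ^ 2) x :=
      ((Real.hasDerivAt_exp x).const_mul p).div (hgd x) (hg x).ne'
    exact h1.sub h2
  have hF1deriv_nonneg : ∀ x,
      0 ≤ 1 / 4 - (p * Real.exp x * g x - p * Real.exp x * (p * Real.exp x)) / (g x) ^ 2 := by
    intro x
    rw [sub_nonneg, div_le_iff₀ (pow_pos (hg x) 2)]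
    have hge : g x = 1 - p + p * Real.exp x := rfl
    have he := exp_pos x
    nlinarith [sq_nonneg ((1 - p) - p * Real.exp x), mul_nonneg hp0 he.le]
  have hF1mono : Monotone F1 :=
    monotone_of_deriv_nonneg (fun x => (hF1d x).differentiableAt)
      (fun x => by rw [(hF1d x).deriv]; exact hF1deriv_nonneg x)
  have hF10 : F1 0 = 0 := by
    simp only [hF1_def, hg_def]
    norm_num
  have hFc : Continuous F := by
    have : Differentiable ℝ F := fun x => (hFd x).differentiableAt
    exact this.continuous
  have hF0 : F 0 = 0 := by
    simp only [hF_def, hg_def]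
    norm_num
  have key : 0 ≤ F h := by
    rcases le_total 0 h with hh | hh
    · have : MonotoneOn F (Set.Ici 0) := by
        apply monotoneOn_of_deriv_nonneg (convex_Ici 0) (hFc.continuousOn)
          (fun x _ => (hFd x).differentiableAt.differentiableWithinAt)
        intro x hx
        rw [(hFd x).deriv]
        rw [interior_Ici] at hx
        have := hF1mono (le_of_lt hx)
        rwa [hF10] at this
      have := this (Set.self_mem_Ici) (Set.mem_Ici.2 hh) hh
      rwa [hF0] at this
    · have : AntitoneOn F (Set.Iic 0) := by
        apply antitoneOn_of_deriv_nonpos (convex_Iic 0) (hFc.continuousOn)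
          (fun x _ => (hFd x).differentiableAt.differentiableWithinAt)
        intro x hx
        rw [(hFd x).deriv]
        rw [interior_Iic] at hx
        have := hF1mono (le_of_lt hx)
        rw [hF10] at this
        linarith
      have := this (Set.mem_Iic.2 hh) (Set.self_mem_Iic) hh
      rwa [hF0] at this
  have : Real.log (g h) ≤ p * h + h ^ 2 / 8 := by
    simp only [hF_def] at key
    linarith
  exact this

lemma integrable_of_ae_bound {Ω : Type*} [MeasurableSpace Ω] {P : Measure Ω}
    [IsProbabilityMeasure P] {f : Ω → ℝ} (hf : AEStronglyMeasurable f P) {C : ℝ}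
    (h : ∀ᵐ ω ∂P, ‖f ω‖ ≤ C) : Integrable f P :=
  (integrable_const C).mono' hf h

lemma norm_le_of_Icc {w a b : ℝ} (hw : w ∈ Set.Icc a b) : ‖w‖ ≤ |a| + |b| := by
  rw [Real.norm_eq_abs, abs_le]
  constructor
  · have := hw.1; cases abs_cases a with
    | inl h => nlinarith [abs_nonneg b]
    | inr h => nlinarith [abs_nonneg b]
  · have := hw.2; cases abs_cases b with
    | inl h => nlinarith [abs_nonneg a]
    | inr h => nlinarith [abs_nonneg a]

lemma integrable_exp_mul {Ω : Type*} [MeasurableSpace Ω] {P : Measure Ω}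
    [IsProbabilityMeasure P] {W : Ω → ℝ} (hW : Measurable W) (a b t : ℝ)
    (hbdd : ∀ᵐ ω ∂P, W ω ∈ Set.Icc a b) :
    Integrable (fun ω => Real.exp (t * W ω)) P := by
  apply integrable_of_ae_bound ((hW.const_mul t).exp).aestronglyMeasurable
    (C := Real.exp (|t| * (|a| + |b|)))
  filter_upwards [hbdd] with ω hω
  rw [Real.norm_eq_abs, Real.abs_exp]
  apply Real.exp_le_exp.2
  calc t * W ω ≤ |t * W ω| := le_abs_self _
    _ = |t| * |W ω| := abs_mul _ _
    _ ≤ |t| * (|a| + |b|) := by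
        have := norm_le_of_Icc hω
        rw [Real.norm_eq_abs] at this
        exact mul_le_mul_of_nonneg_left this (abs_nonneg t)

lemma hoeffding_mgf {Ω : Type*} [MeasurableSpace Ω] (P : Measure Ω) [IsProbabilityMeasure P]
    (W : Ω → ℝ) (hW : Measurable W) (a b s : ℝ)
    (hbdd : ∀ᵐ ω ∂P, W ω ∈ Set.Icc a b) (hmean : ∫ ω, W ω ∂P = 0) :
    ∫ ω, Real.exp (s * W ω) ∂P ≤ Real.exp (s ^ 2 * (b - a) ^ 2 / 8) := by
  have hWnorm : ∀ᵐ ω ∂P, ‖W ω‖ ≤ |a| + |b| := by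
    filter_upwards [hbdd] with ω hω using norm_le_of_Icc hω
  have hWint : Integrable W P :=
    integrable_of_ae_bound hW.aestronglyMeasurable hWnorm
  have ha : a ≤ 0 := by
    have : ∫ _ω, a ∂P ≤ ∫ ω, W ω ∂P := by
      apply integral_mono_ae (integrable_const a) hWint
      filter_upwards [hbdd] with ω hω using hω.1
    simpa [hmean] using this
  have hb : 0 ≤ b := by
    have : ∫ ω, W ω ∂P ≤ ∫ _ω, b ∂P := by
      apply integral_mono_ae hWint (integrable_const b)
      filter_upwards [hbdd] with ω hω using hω.2
    simpa [hmean] using this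
  rcases eq_or_lt_of_le (ha.trans hb) with hab | hab
  · have ha0 : a = 0 := le_antisymm ha (hab ▸ hb)
    have hb0 : b = 0 := by rw [← hab, ha0]
    have : ∫ ω, Real.exp (s * W ω) ∂P = 1 := by
      rw [show (1 : ℝ) = ∫ _ω, (1:ℝ) ∂P by simp]
      apply integral_congr_ae
      filter_upwards [hbdd] with ω hω
      rw [ha0, hb0] at hω
      have : W ω = 0 := le_antisymm hω.2 hω.1
      simp [this]
    rw [this]
    exact Real.one_le_exp (by positivity)
  · set p : ℝ := -a / (b - a) with hp_def
    have hba : 0 < b - a := by linarith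
    have hp0 : 0 ≤ p := div_nonneg (neg_nonneg.2 ha) hba.le
    have hp1 : p ≤ 1 := by rw [hp_def, div_le_one hba]; linarith
    have hpt : ∀ ω, W ω ∈ Set.Icc a b → Real.exp (s * W ω) ≤
        (Real.exp (s*a)/(b-a)) * (b - W ω) + (Real.exp (s*b)/(b-a)) * (W ω - a) := by
      intro ω hω
      set u : ℝ := (W ω - a)/(b-a) with hu_def
      have hu0 : 0 ≤ u := div_nonneg (by linarith [hω.1]) hba.le
      have hu1 : 1 - u = (b - W ω)/(b - a) := by rw [hu_def]; field_simp; ring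
      have hu1' : 0 ≤ 1 - u := by
        rw [hu1]; exact div_nonneg (by linarith [hω.2]) hba.le
      have hcx := convexOn_exp.2 (Set.mem_univ (s*a)) (Set.mem_univ (s*b)) hu1' hu0 (by ring)
      have harg : (1 - u) • (s*a) + u • (s*b) = s * W ω := by
        simp only [smul_eq_mul, hu_def]
        field_simp
        ring
      rw [harg] at hcx
      calc Real.exp (s * W ω) ≤ (1-u) * Real.exp (s*a) + u * Real.exp (s*b) := by
            simpa using hcx
        _ = (Real.exp (s*a)/(b-a)) * (b - W ω) + (Real.exp (s*b)/(b-a)) * (W ω - a) := by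
            rw [hu1, hu_def]; field_simp
    have hint1 : Integrable (fun ω => Real.exp (s * W ω)) P :=
      integrable_exp_mul hW a b s hbdd
    have hint2 : Integrable (fun ω => (Real.exp (s*a)/(b-a)) * (b - W ω)
        + (Real.exp (s*b)/(b-a)) * (W ω - a)) P :=
      (((integrable_const b).sub hWint).const_mul _).add
        ((hWint.sub (integrable_const a)).const_mul _)
    have hstep : ∫ ω, Real.exp (s * W ω) ∂P ≤ (1-p) * Real.exp (s*a) + p * Real.exp (s*b) := by
      have hmono := integral_mono_ae hint1 hint2
        (by filter_upwards [hbdd] with ω hω using hpt ω hω)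
      have hrhs : ∫ ω, ((Real.exp (s*a)/(b-a)) * (b - W ω)
          + (Real.exp (s*b)/(b-a)) * (W ω - a)) ∂P
          = (1-p) * Real.exp (s*a) + p * Real.exp (s*b) := by
        have i1 : Integrable (fun ω => (Real.exp (s*a)/(b-a)) * (b - W ω)) P :=
          ((integrable_const b).sub hWint).const_mul _
        have i2 : Integrable (fun ω => (Real.exp (s*b)/(b-a)) * (W ω - a)) P :=
          (hWint.sub (integrable_const a)).const_mul _
        have h1 : ∫ ω, (Real.exp (s*a)/(b-a)) * (b - W ω) ∂P = (Real.exp (s*a)/(b-a)) * b := by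
          rw [integral_const_mul, integral_sub (integrable_const b) hWint, hmean, integral_const]
          simp
        have h2 : ∫ ω, (Real.exp (s*b)/(b-a)) * (W ω - a) ∂P
            = (Real.exp (s*b)/(b-a)) * (-a) := by
          rw [integral_const_mul, integral_sub hWint (integrable_const a), hmean, integral_const]
          simp
        rw [integral_add i1 i2, h1, h2, hp_def]
        field_simp
        ring
      rw [hrhs] at hmono
      exact hmono
    have hgle : 1 - p + p * Real.exp (s*(b-a)) ≤ Real.exp (p*(s*(b-a)) + (s*(b-a))^2/8) :=
      (Real.log_le_iff_le_exp (hoeff_g_pos p hp0 hp1 _)).1 (hoeff_log_bound p hp0 hp1 _)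
    calc ∫ ω, Real.exp (s * W ω) ∂P ≤ (1-p) * Real.exp (s*a) + p * Real.exp (s*b) := hstep
      _ = Real.exp (s*a) * (1 - p + p * Real.exp (s*(b-a))) := by
          rw [show s*b = s*a + s*(b-a) by ring, Real.exp_add]; ring
      _ ≤ Real.exp (s*a) * Real.exp (p*(s*(b-a)) + (s*(b-a))^2/8) :=
          mul_le_mul_of_nonneg_left hgle (Real.exp_pos _).le
      _ = Real.exp (s*a + (p*(s*(b-a)) + (s*(b-a))^2/8)) := (Real.exp_add _ _).symm
      _ = Real.exp (s ^ 2 * (b - a) ^ 2 / 8) := by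
          congr 1
          rw [hp_def]
          field_simp
          ring

lemma hoeffding_tail {Ω : Type*} [MeasurableSpace Ω] (P : Measure Ω) [IsProbabilityMeasure P]
    (W : Ω → ℝ) (hW : Measurable W) (a b ε : ℝ) (hab : a < b) (hε : 0 ≤ ε)
    (hbdd : ∀ᵐ ω ∂P, W ω ∈ Set.Icc a b) (hmean : ∫ ω, W ω ∂P = 0) :
    (P {ω | W ω ≤ -ε}).toReal ≤ Real.exp (-2 * ε^2 / (b-a)^2) := by
  set t : ℝ := -(4*ε/(b-a)^2) with ht_def
  have hba : 0 < b - a := by linarith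
  have ht : t ≤ 0 := neg_nonpos.2 (by positivity)
  have hint : Integrable (fun ω => Real.exp (t * W ω)) P :=
    integrable_exp_mul hW a b t hbdd
  have hch := measure_le_le_exp_mul_mgf (X := W) (μ := P) (-ε) ht hint
  have hmgf : mgf W P t ≤ Real.exp (t^2*(b-a)^2/8) := by
    have := hoeffding_mgf P W hW a b t hbdd hmean
    simpa [mgf] using this
  calc (P {ω | W ω ≤ -ε}).toReal ≤ Real.exp (-t * -ε) * mgf W P t := hch
    _ ≤ Real.exp (-t * -ε) * Real.exp (t^2*(b-a)^2/8) :=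
        mul_le_mul_of_nonneg_left hmgf (Real.exp_pos _).le
    _ = Real.exp (-t * -ε + t^2*(b-a)^2/8) := (Real.exp_add _ _).symm
    _ = Real.exp (-2 * ε^2 / (b-a)^2) := by
        congr 1
        rw [ht_def]
        field_simp
        ring

end Hoeffding

section MatrixLemmas

lemma qf_conj_diag {n : ℕ} (U : Matrix (Fin n) (Fin n) ℝ) (d : Fin n → ℝ) (x : Fin n → ℝ) :
    x ⬝ᵥ (U * Matrix.diagonal d * star U) *ᵥ x = ∑ i, d i * ((star U) *ᵥ x) i ^ 2 := by
  rw [← mulVec_mulVec, ← mulVec_mulVec]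
  rw [Matrix.dotProduct_mulVec]
  have hstar : star U = Uᵀ := by
    rw [Matrix.star_eq_conjTranspose, Matrix.conjTranspose_eq_transpose_of_trivial]
  have hvm : x ᵥ* U = (star U) *ᵥ x := by rw [hstar, Matrix.mulVec_transpose]
  rw [hvm]
  simp only [dotProduct, Matrix.mulVec_diagonal]
  apply Finset.sum_congr rfl
  intro i _
  ring

lemma lamMin_le_eigenvalues {n : ℕ} {M : Matrix (Fin n) (Fin n) ℝ} (hH : M.IsHermitian)
    (i : Fin n) : lamMin M ≤ hH.eigenvalues i := by
  rw [lamMin, hH.spectrum_real_eq_range_eigenvalues]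
  exact csInf_le (Set.finite_range hH.eigenvalues).bddBelow (Set.mem_range_self i)

lemma lamMin_pos {n : ℕ} (hn : 0 < n) {M : Matrix (Fin n) (Fin n) ℝ} (hM : M.PosDef) :
    0 < lamMin M := by
  haveI : NeZero n := ⟨hn.ne'⟩
  rw [lamMin, hM.1.spectrum_real_eq_range_eigenvalues]
  obtain ⟨i, hi⟩ := (Set.range_nonempty hM.1.eigenvalues).csInf_mem
    (Set.finite_range hM.1.eigenvalues)
  rw [← hi]
  exact hM.eigenvalues_pos i

lemma qf_inv_bounds {n : ℕ} (hn : 0 < n) (M : Matrix (Fin n) (Fin n) ℝ) (hM : M.PosDef)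
    (x : Fin n → ℝ) :
    0 ≤ x ⬝ᵥ M⁻¹ *ᵥ x ∧ x ⬝ᵥ M⁻¹ *ᵥ x ≤ (1 / lamMin M) * (x ⬝ᵥ x) := by
  haveI : NeZero n := ⟨hn.ne'⟩
  have hH : M.IsHermitian := hM.1
  set U : Matrix (Fin n) (Fin n) ℝ := (hH.eigenvectorUnitary : Matrix (Fin n) (Fin n) ℝ)
    with hU_def
  set eig : Fin n → ℝ := hH.eigenvalues with heig_def
  have hUmem := hH.eigenvectorUnitary.2
  have hUsU : U * star U = 1 := (Matrix.mem_unitaryGroup_iff).1 hUmem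
  have hsUU : star U * U = 1 := (Matrix.mem_unitaryGroup_iff').1 hUmem
  have hspec : M = U * Matrix.diagonal eig * star U := by
    have := hH.spectral_theorem
    rwa [show (RCLike.ofReal ∘ hH.eigenvalues : Fin n → ℝ) = eig by
      rw [RCLike.ofReal_real_eq_id]; rfl] at this
  have heigpos : ∀ i, 0 < eig i := fun i => hM.eigenvalues_pos i
  have hinv : M⁻¹ = U * Matrix.diagonal (fun i => (eig i)⁻¹) * star U := by
    apply Matrix.inv_eq_right_inv
    calc M * (U * Matrix.diagonal (fun i => (eig i)⁻¹) * star U)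
        = U * (Matrix.diagonal eig * ((star U * U) * (Matrix.diagonal (fun i => (eig i)⁻¹)
            * star U))) := by rw [hspec]; simp only [Matrix.mul_assoc]
      _ = U * ((Matrix.diagonal eig * Matrix.diagonal (fun i => (eig i)⁻¹)) * star U) := by
          rw [hsUU, Matrix.one_mul, Matrix.mul_assoc]
      _ = 1 := by
          rw [Matrix.diagonal_mul_diagonal]
          have : (fun i => eig i * (eig i)⁻¹) = fun _ => (1:ℝ) := by
            funext i; exact mul_inv_cancel₀ (heigpos i).ne'
          rw [this, Matrix.diagonal_one, Matrix.one_mul, hUsU]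
  have hlam_le : ∀ i, lamMin M ≤ eig i := fun i => lamMin_le_eigenvalues hH i
  have hlam_pos : 0 < lamMin M := lamMin_pos hn hM
  set y : Fin n → ℝ := (star U) *ᵥ x with hy_def
  have hqf : x ⬝ᵥ M⁻¹ *ᵥ x = ∑ i, (eig i)⁻¹ * y i ^ 2 := by
    rw [hinv, qf_conj_diag]
  have hxx : x ⬝ᵥ x = ∑ i, y i ^ 2 := by
    have := qf_conj_diag U (fun _ => (1:ℝ)) x
    rw [Matrix.diagonal_one, Matrix.mul_one, hUsU] at this
    simpa using this
  constructor
  · rw [hqf]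
    apply Finset.sum_nonneg
    intro i _
    exact mul_nonneg (inv_nonneg.2 (heigpos i).le) (sq_nonneg _)
  · rw [hqf, hxx, one_div, Finset.mul_sum]
    apply Finset.sum_le_sum
    intro i _
    apply mul_le_mul_of_nonneg_right _ (sq_nonneg _)
    exact inv_anti₀ hlam_pos (hlam_le i)

end MatrixLemmas

/-- **Lemma 4 of the paper.** Under the alternative hypothesis (mean `0`, covariance
`Σ'_{t₀}`, entries a.s. bounded by `V`), the generalized likelihood ratio `2𝔏 = max_t Z_t`
with `Z_t = XᵀΣ⁻¹X − Xᵀ(Σ'_t)⁻¹X + ln(det Σ / det Σ'_t)` falls below the threshold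
`min_t (Tr(Σ'_t Σ⁻¹) − n + ln(det Σ / det Σ'_t)) − C₀V²n√(0.5 ln(2/δ))`
with probability at most `δ/2`. -/
theorem glrt_type_two_error
    {Ω : Type*} [MeasurableSpace Ω] (P : Measure Ω) [IsProbabilityMeasure P]
    {n : ℕ} (hn : 1 ≤ n) (δ V : ℝ) (hδ : δ ∈ Set.Ioo (0 : ℝ) 1) (hV : 0 < V)
    (S : Matrix (Fin n) (Fin n) ℝ) (hS : S.PosDef)
    (S' : Fin n → Matrix (Fin n) (Fin n) ℝ) (hS' : ∀ t, (S' t).PosDef)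
    (C₀ : ℝ) (hC₀ : ∀ t, 1 / lamMin S + 1 / lamMin (S' t) ≤ C₀)
    (t₀ : Fin n)
    (X : Ω → Fin n → ℝ) (hX : Measurable X)
    (hmean : ∀ i, ∫ ω, X ω i ∂P = 0)
    (hcov : ∀ i j, ∫ ω, X ω i * X ω j ∂P = S' t₀ i j)
    (hbdd : ∀ᵐ ω ∂P, ∀ i, X ω i ∈ Set.Icc (-V) V) :
    P {ω | (⨆ t : Fin n, (X ω ⬝ᵥ S⁻¹.mulVec (X ω) - X ω ⬝ᵥ (S' t)⁻¹.mulVec (X ω)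
            + Real.log (S.det / (S' t).det)))
          ≤ (⨅ t : Fin n, ((S' t * S⁻¹).trace - (n : ℝ) + Real.log (S.det / (S' t).det)))
            - C₀ * V ^ 2 * n * Real.sqrt (0.5 * Real.log (2 / δ))}
      ≤ ENNReal.ofReal (δ / 2) := by
  have hn0 : 0 < n := hn
  haveI : NeZero n := ⟨hn0.ne'⟩
  -- abbreviations
  set A : Matrix (Fin n) (Fin n) ℝ := S⁻¹ with hA_def
  set B : Matrix (Fin n) (Fin n) ℝ := (S' t₀)⁻¹ with hB_def
  set Y : Ω → ℝ := fun ω => X ω ⬝ᵥ A *ᵥ X ω - X ω ⬝ᵥ B *ᵥ X ω with hY_def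
  -- measurability of quadratic forms
  have hqf_meas : ∀ M : Matrix (Fin n) (Fin n) ℝ, Measurable (fun ω => X ω ⬝ᵥ M *ᵥ X ω) := by
    intro M
    have : (fun ω => X ω ⬝ᵥ M *ᵥ X ω) = fun ω => ∑ i, ∑ j, X ω i * (M i j * X ω j) := by
      funext ω
      simp [dotProduct, Matrix.mulVec, Finset.mul_sum]
    rw [this]
    exact Finset.measurable_sum _ (fun i _ => Finset.measurable_sum _ (fun j _ =>
      ((measurable_pi_apply i).comp hX).mul
        (((measurable_pi_apply j).comp hX).const_mul (M i j))))
  have hY_meas : Measurable Y := (hqf_meas A).sub (hqf_meas B)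
  -- integrability of products
  have hij_int : ∀ i j, Integrable (fun ω => X ω i * X ω j) P := by
    intro i j
    apply integrable_of_ae_bound
      (((measurable_pi_apply i).comp hX).mul ((measurable_pi_apply j).comp hX)).aestronglyMeasurable
      (C := V * V)
    filter_upwards [hbdd] with ω hω
    rw [Real.norm_eq_abs, Pi.mul_apply, abs_mul]
    have h1 : |X ω i| ≤ V := abs_le.2 ⟨(hω i).1, (hω i).2⟩
    have h2 : |X ω j| ≤ V := abs_le.2 ⟨(hω j).1, (hω j).2⟩
    exact mul_le_mul h1 h2 (abs_nonneg _) hV.le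
  -- expectation of quadratic forms
  have hqf_int : ∀ M : Matrix (Fin n) (Fin n) ℝ,
      ∫ ω, X ω ⬝ᵥ M *ᵥ X ω ∂P = ∑ i, ∑ j, M i j * S' t₀ i j := by
    intro M
    have hrw : (fun ω => X ω ⬝ᵥ M *ᵥ X ω) = fun ω => ∑ i, ∑ j, M i j * (X ω i * X ω j) := by
      funext ω
      simp only [dotProduct, Matrix.mulVec, Finset.mul_sum]
      apply Finset.sum_congr rfl
      intro i _
      apply Finset.sum_congr rfl
      intro j _
      ring
    rw [hrw]
    rw [integral_finset_sum _ (fun i _ => integrable_finset_sum _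
      (fun j _ => (hij_int i j).const_mul (M i j)))]
    apply Finset.sum_congr rfl
    intro i _
    rw [integral_finset_sum _ (fun j _ => (hij_int i j).const_mul (M i j))]
    apply Finset.sum_congr rfl
    intro j _
    rw [integral_const_mul, hcov i j]
  -- sum-trace identity for symmetric matrices
  have htrace : ∀ M : Matrix (Fin n) (Fin n) ℝ, M.IsHermitian →
      ∑ i, ∑ j, M i j * S' t₀ i j = (S' t₀ * M).trace := by
    intro M hM
    have hsym : ∀ i j, M i j = M j i := by
      intro i j
      have := congrFun (congrFun hM.symm i) j
      simpa [Matrix.conjTranspose_apply] using this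
    rw [Matrix.trace]
    simp only [Matrix.diag_apply, Matrix.mul_apply]
    have hsym' : ∀ i j, S' t₀ i j = S' t₀ j i := by
      intro i j
      have := congrFun (congrFun (hS' t₀).1.symm i) j
      simpa [Matrix.conjTranspose_apply] using this
    rw [Finset.sum_comm]
    apply Finset.sum_congr rfl
    intro i _
    apply Finset.sum_congr rfl
    intro j _
    rw [hsym' i j]
    ring
  -- mean of Y
  set m : ℝ := (S' t₀ * A).trace - n with hm_def
  have hBinv : S' t₀ * B = 1 := Matrix.mul_nonsing_inv _ (hS' t₀).det_pos.ne'.isUnit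
  have hYint : Integrable Y P := by
    apply Integrable.sub
    · have : (fun ω => X ω ⬝ᵥ A *ᵥ X ω) = fun ω => ∑ i, ∑ j, A i j * (X ω i * X ω j) := by
        funext ω
        simp only [dotProduct, Matrix.mulVec, Finset.mul_sum]
        exact Finset.sum_congr rfl fun i _ => Finset.sum_congr rfl fun j _ => by ring
      rw [this]
      exact integrable_finset_sum _ (fun i _ => integrable_finset_sum _
        (fun j _ => (hij_int i j).const_mul (A i j)))
    · have : (fun ω => X ω ⬝ᵥ B *ᵥ X ω) = fun ω => ∑ i, ∑ j, B i j * (X ω i * X ω j) := by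
        funext ω
        simp only [dotProduct, Matrix.mulVec, Finset.mul_sum]
        exact Finset.sum_congr rfl fun i _ => Finset.sum_congr rfl fun j _ => by ring
      rw [this]
      exact integrable_finset_sum _ (fun i _ => integrable_finset_sum _
        (fun j _ => (hij_int i j).const_mul (B i j)))
  have hYmean : ∫ ω, Y ω ∂P = m := by
    rw [hY_def]
    rw [integral_sub ?_ ?_]
    · rw [hqf_int A, hqf_int B, htrace A hS.inv.1, htrace B (hS' t₀).inv.1, hBinv,
        Matrix.trace_one, hm_def]
      simp
    · have : (fun ω => X ω ⬝ᵥ A *ᵥ X ω) = fun ω => ∑ i, ∑ j, A i j * (X ω i * X ω j) := by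
        funext ω
        simp only [dotProduct, Matrix.mulVec, Finset.mul_sum]
        exact Finset.sum_congr rfl fun i _ => Finset.sum_congr rfl fun j _ => by ring
      rw [this]
      exact integrable_finset_sum _ (fun i _ => integrable_finset_sum _
        (fun j _ => (hij_int i j).const_mul (A i j)))
    · have : (fun ω => X ω ⬝ᵥ B *ᵥ X ω) = fun ω => ∑ i, ∑ j, B i j * (X ω i * X ω j) := by
        funext ω
        simp only [dotProduct, Matrix.mulVec, Finset.mul_sum]
        exact Finset.sum_congr rfl fun i _ => Finset.sum_congr rfl fun j _ => by ring
      rw [this]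
      exact integrable_finset_sum _ (fun i _ => integrable_finset_sum _
        (fun j _ => (hij_int i j).const_mul (B i j)))
  -- bounds on Y
  have hlamS : 0 < lamMin S := lamMin_pos hn0 hS
  have hlamS' : 0 < lamMin (S' t₀) := lamMin_pos hn0 (hS' t₀)
  set M1 : ℝ := (1 / lamMin S) * (n * V ^ 2) with hM1_def
  set M2 : ℝ := (1 / lamMin (S' t₀)) * (n * V ^ 2) with hM2_def
  have hM1pos : 0 < M1 := by
    apply mul_pos (by positivity)
    have : (0:ℝ) < n := by exact_mod_cast hn0
    positivity
  have hM2pos : 0 < M2 := by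
    apply mul_pos (by positivity)
    have : (0:ℝ) < n := by exact_mod_cast hn0
    positivity
  have hYbdd : ∀ᵐ ω ∂P, Y ω ∈ Set.Icc (-M2) M1 := by
    filter_upwards [hbdd] with ω hω
    have hxx : X ω ⬝ᵥ X ω ≤ n * V ^ 2 := by
      rw [dotProduct]
      calc ∑ i, X ω i * X ω i ≤ ∑ _i : Fin n, V ^ 2 := by
            apply Finset.sum_le_sum
            intro i _
            have h1 : |X ω i| ≤ V := abs_le.2 ⟨(hω i).1, (hω i).2⟩
            nlinarith [abs_nonneg (X ω i), sq_abs (X ω i)]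
        _ = n * V ^ 2 := by simp [Finset.sum_const, Finset.card_univ]
    have hQ1 := qf_inv_bounds hn0 S hS (X ω)
    have hQ2 := qf_inv_bounds hn0 (S' t₀) (hS' t₀) (X ω)
    constructor
    · have : X ω ⬝ᵥ B *ᵥ X ω ≤ M2 := by
        calc X ω ⬝ᵥ B *ᵥ X ω ≤ (1 / lamMin (S' t₀)) * (X ω ⬝ᵥ X ω) := hQ2.2
          _ ≤ M2 := by
              rw [hM2_def]
              exact mul_le_mul_of_nonneg_left hxx (by positivity)
      have h0 : 0 ≤ X ω ⬝ᵥ A *ᵥ X ω := hQ1.1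
      simp only [hY_def]
      linarith
    · have : X ω ⬝ᵥ A *ᵥ X ω ≤ M1 := by
        calc X ω ⬝ᵥ A *ᵥ X ω ≤ (1 / lamMin S) * (X ω ⬝ᵥ X ω) := hQ1.2
          _ ≤ M1 := by
              rw [hM1_def]
              exact mul_le_mul_of_nonneg_left hxx (by positivity)
      have h0 : 0 ≤ X ω ⬝ᵥ B *ᵥ X ω := hQ2.1
      simp only [hY_def]
      linarith
  -- the centered variable
  set W : Ω → ℝ := fun ω => Y ω - m with hW_def
  have hW_meas : Measurable W := hY_meas.sub measurable_const
  have hWmean : ∫ ω, W ω ∂P = 0 := by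
    rw [hW_def]
    rw [integral_sub hYint (integrable_const m), hYmean, integral_const]
    simp
  have hWbdd : ∀ᵐ ω ∂P, W ω ∈ Set.Icc (-M2 - m) (M1 - m) := by
    filter_upwards [hYbdd] with ω hω
    exact ⟨by simp only [hW_def]; linarith [hω.1], by simp only [hW_def]; linarith [hω.2]⟩
  -- parameters
  set L : ℝ := C₀ * V ^ 2 * n with hL_def
  set ε : ℝ := L * Real.sqrt (0.5 * Real.log (2 / δ)) with hε_def
  have hlog : 0 < Real.log (2 / δ) := by
    apply Real.log_pos
    rw [lt_div_iff₀ hδ.1]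
    linarith [hδ.2]
  have hC₀pos : 0 < C₀ := lt_of_lt_of_le (by positivity) (hC₀ t₀)
  have hLpos : 0 < L := by
    rw [hL_def]
    have : (0:ℝ) < n := by exact_mod_cast hn0
    positivity
  have hεpos : 0 ≤ ε := by
    rw [hε_def]
    positivity
  have hD_le_L : M1 + M2 ≤ L := by
    have := hC₀ t₀
    rw [hM1_def, hM2_def, hL_def]
    have hnV : (0:ℝ) ≤ n * V ^ 2 := by positivity
    nlinarith
  -- event inclusion
  have hsub : {ω | (⨆ t : Fin n, (X ω ⬝ᵥ S⁻¹.mulVec (X ω) - X ω ⬝ᵥ (S' t)⁻¹.mulVec (X ω)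
            + Real.log (S.det / (S' t).det)))
          ≤ (⨅ t : Fin n, ((S' t * S⁻¹).trace - (n : ℝ) + Real.log (S.det / (S' t).det)))
            - C₀ * V ^ 2 * n * Real.sqrt (0.5 * Real.log (2 / δ))}
      ⊆ {ω | W ω ≤ -ε} := by
    intro ω hω
    simp only [Set.mem_setOf_eq] at hω ⊢
    have h1 : X ω ⬝ᵥ S⁻¹.mulVec (X ω) - X ω ⬝ᵥ (S' t₀)⁻¹.mulVec (X ω)
        + Real.log (S.det / (S' t₀).det)
        ≤ ⨆ t : Fin n, (X ω ⬝ᵥ S⁻¹.mulVec (X ω) - X ω ⬝ᵥ (S' t)⁻¹.mulVec (X ω)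
            + Real.log (S.det / (S' t).det)) :=
      le_ciSup (f := fun t : Fin n => X ω ⬝ᵥ S⁻¹.mulVec (X ω) - X ω ⬝ᵥ (S' t)⁻¹.mulVec (X ω)
        + Real.log (S.det / (S' t).det)) (Set.Finite.bddAbove (Set.finite_range _)) t₀
    have h2 : (⨅ t : Fin n, ((S' t * S⁻¹).trace - (n : ℝ) + Real.log (S.det / (S' t).det)))
        ≤ (S' t₀ * S⁻¹).trace - (n : ℝ) + Real.log (S.det / (S' t₀).det) :=
      ciInf_le (Set.Finite.bddBelow (Set.finite_range _)) t₀
    have : X ω ⬝ᵥ S⁻¹.mulVec (X ω) - X ω ⬝ᵥ (S' t₀)⁻¹.mulVec (X ω)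
        ≤ (S' t₀ * S⁻¹).trace - (n : ℝ) - ε := by
      rw [hε_def, hL_def]
      linarith
    simp only [hW_def, hY_def, hm_def, hA_def, hB_def]
    have hmv : S⁻¹.mulVec (X ω) = S⁻¹ *ᵥ X ω := rfl
    linarith [this]
  -- apply Hoeffding
  have hab : -M2 - m < M1 - m := by linarith
  have htail := hoeffding_tail P W hW_meas (-M2 - m) (M1 - m) ε hab hεpos hWbdd hWmean
  have hDD : (M1 - m) - (-M2 - m) = M1 + M2 := by ring
  rw [hDD] at htail
  -- final numeric bound
  have hfinal : Real.exp (-2 * ε ^ 2 / (M1 + M2) ^ 2) ≤ δ / 2 := by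
    have hDpos : 0 < M1 + M2 := by linarith
    have hsq : ε ^ 2 = L ^ 2 * (0.5 * Real.log (2 / δ)) := by
      rw [hε_def, mul_pow, Real.sq_sqrt (by positivity)]
    have hmono : -2 * ε ^ 2 / (M1 + M2) ^ 2 ≤ -2 * ε ^ 2 / L ^ 2 := by
      rw [neg_mul, neg_div, neg_div, neg_le_neg_iff]
      apply div_le_div_of_nonneg_left (by positivity) (by positivity)
      apply pow_le_pow_left₀ hDpos.le hD_le_L
    have heq : -2 * ε ^ 2 / L ^ 2 = -Real.log (2 / δ) := by
      rw [hsq]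
      field_simp
      ring
    calc Real.exp (-2 * ε ^ 2 / (M1 + M2) ^ 2) ≤ Real.exp (-2 * ε ^ 2 / L ^ 2) :=
          Real.exp_le_exp.2 hmono
      _ = Real.exp (-Real.log (2 / δ)) := by rw [heq]
      _ = (2 / δ)⁻¹ := by rw [Real.exp_neg, Real.exp_log (div_pos two_pos hδ.1)]
      _ = δ / 2 := by rw [inv_div]
  calc P {ω | (⨆ t : Fin n, (X ω ⬝ᵥ S⁻¹.mulVec (X ω) - X ω ⬝ᵥ (S' t)⁻¹.mulVec (X ω)
            + Real.log (S.det / (S' t).det)))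
          ≤ (⨅ t : Fin n, ((S' t * S⁻¹).trace - (n : ℝ) + Real.log (S.det / (S' t).det)))
            - C₀ * V ^ 2 * n * Real.sqrt (0.5 * Real.log (2 / δ))}
      ≤ P {ω | W ω ≤ -ε} := measure_mono hsub
    _ = ENNReal.ofReal ((P {ω | W ω ≤ -ε}).toReal) :=
        (ENNReal.ofReal_toReal (measure_ne_top P _)).symm
    _ ≤ ENNReal.ofReal (Real.exp (-2 * ε ^ 2 / (M1 + M2) ^ 2)) :=
        ENNReal.ofReal_le_ofReal htail
    _ ≤ ENNReal.ofReal (δ / 2) := ENNReal.ofReal_le_ofReal hfinal
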